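/- Exact linearized-subproblem decrease: under assumptions (A1)-(A3), for each node k define u_k(x_k, z̃, z_k, y_k) := g_k(z̃) + ⟨∇g_k(z̃), x_k − z̃⟩ + Σ_{j∈N_k} y_{kj}(x_{kj} − z_j) + Σ_{j∈N_k} (ρ_k/2)(x_{kj} − z_j)². Since x_k^{t+1} is the exact minimizer of u_k(·, z_k^{[t+1]_k}, z_k^{t+1}, y_k^t), it holds that u_k(x_k^{t+1}, z_k^{t+1}, z_k^{t+1}, y_k^t) − u_k(x_k^t, z_k^{t+1}, z_k^{t+1}, y_k^t) ≤ (L_k T_k/2) Σ_{d=0}^{T_k−1} Σ_{j∈N_k} ‖z_j^{t+1−d} − z_j^{t−d}‖² − ((ρ_k − L_k)/2) Σ_{j∈N_k} ‖x_{kj}^{t+1} − x_{kj}^t‖². -/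

import Mathlib

open Filter Topology RealInnerProductSpace

noncomputable section

/-- Zero-padded restriction of a vector of nodal variables to a neighborhood:
coordinates outside the neighborhood are set to zero. -/
def restr {K : ℕ} (Nk : Finset (Fin K)) (v : Fin K → ℝ) : EuclideanSpace ℝ (Fin K) :=
  WithLp.toLp 2 (fun j => if j ∈ Nk then v j else 0)

/-- The setting of the asynchronous proximal ADMM: network data, assumptions
(A1)-(A2), and the algorithmic update equations (i)-(iii) together with the
delay bounds and the update-frequency condition. -/
structure ProxADMM (K : ℕ) where
  /-- neighborhoods, `j ∈ Nb k` means `j ∈ N_k` -/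
  Nb : Fin K → Finset (Fin K)
  self_mem : ∀ k, k ∈ Nb k
  symm : ∀ k j, j ∈ Nb k ↔ k ∈ Nb j
  /-- local cost of node `k`, as a function of the zero-padded neighborhood variables -/
  g : Fin K → EuclideanSpace ℝ (Fin K) → ℝ
  g_local : ∀ k v w, (∀ j ∈ Nb k, v j = w j) → g k v = g k w
  /-- the Lipschitz constants of (A1) -/
  L : Fin K → ℝ
  L_pos : ∀ k, 0 < L k
  g_diff : ∀ k, Differentiable ℝ (g k)
  /-- (A1): the gradient of `g k` is `L k`-Lipschitz -/
  g_grad_lip : ∀ k v w, ‖gradient (g k) v - gradient (g k) w‖ ≤ L k * ‖v - w‖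
  /-- the convex nonsmooth part -/
  h : Fin K → ℝ → ℝ
  h_convex : ∀ k, ConvexOn ℝ Set.univ (h k)
  /-- the constraint sets -/
  Xs : Fin K → Set ℝ
  Xs_nonempty : ∀ k, (Xs k).Nonempty
  Xs_compact : ∀ k, IsCompact (Xs k)
  Xs_convex : ∀ k, Convex ℝ (Xs k)
  /-- (A2): `g k` is bounded below over the constraint set -/
  g_bddBelow : ∀ k, ∃ b, ∀ v : Fin K → ℝ, (∀ j, v j ∈ Xs j) → b ≤ g k (restr (Nb k) v)
  /-- penalty parameters -/
  ρ : Fin K → ℝ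
  ρ_pos : ∀ k, 0 < ρ k
  /-- update frequencies `f_k` -/
  freq : Fin K → ℝ
  freq_pos : ∀ k, 0 < freq k
  freq_le_one : ∀ k, freq k ≤ 1
  /-- maximum delays `T_k` -/
  Td : Fin K → ℕ
  /-- updating sets `S^t` -/
  Sset : ℕ → Finset (Fin K)
  /-- delayed index: `τ t k = [t+1]_k` -/
  τ : ℕ → Fin K → ℕ
  τ_le : ∀ t k, τ t k ≤ t + 1
  τ_ge : ∀ t k, t + 1 ≤ τ t k + Td k
  /-- iterates -/
  x : ℕ → Fin K → Fin K → ℝ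
  z : ℕ → Fin K → ℝ
  y : ℕ → Fin K → Fin K → ℝ
  z_init_mem : ∀ j, z 0 j ∈ Xs j
  /-- (i): feasibility of the `z`-update -/
  z_update_mem : ∀ t j, j ∈ Sset t → z (t + 1) j ∈ Xs j
  /-- (i): for `j ∈ S^t`, `z_j^{t+1}` minimizes the `j`-th block over `X_j` -/
  z_update_min : ∀ t j, j ∈ Sset t → IsMinOn
      (fun w => h j w + ∑ k ∈ Nb j, (y t k j * (x t k j - w) + ρ k / 2 * (x t k j - w) ^ 2))
      (Xs j) (z (t + 1) j)
  /-- (i): non-updating nodes keep their old value -/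
  z_noupdate : ∀ t j, j ∉ Sset t → z (t + 1) j = z t j
  /-- (ii): proximal (linearized) `x`-update with delayed gradient -/
  x_update : ∀ t k, ∀ j ∈ Nb k,
      x (t + 1) k j = z (t + 1) j
        - (1 / ρ k) * (gradient (g k) (restr (Nb k) (z (τ t k))) j + y t k j)
  /-- (iii): dual update -/
  y_update : ∀ t k, ∀ j ∈ Nb k,
      y (t + 1) k j = y t k j + ρ k * (x (t + 1) k j - z (t + 1) j)
  /-- in any window of `T` consecutive iterations node `k` updates at least `f_k T` times -/
  update_freq : ∀ k (t₀ T : ℕ),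
      freq k * T ≤ ((Finset.Ico t₀ (t₀ + T)).filter (fun t => k ∈ Sset t)).card

/-- The augmented Lagrangian. -/
def ProxADMM.Lag {K : ℕ} (P : ProxADMM K) (xx : Fin K → Fin K → ℝ) (zz : Fin K → ℝ)
    (yy : Fin K → Fin K → ℝ) : ℝ :=
  ∑ k, (P.g k (restr (P.Nb k) (xx k)) + P.h k (zz k)
    + ∑ j ∈ P.Nb k, (yy k j * (xx k j - zz j) + P.ρ k / 2 * (xx k j - zz j) ^ 2))

end

/-- The linearized local objective
`u_k(x_k, z̃, z_k, y_k) = g_k(z̃) + ⟨∇g_k(z̃), x_k − z̃⟩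
  + Σ_{j∈N_k} y_{kj}(x_{kj} − z_j) + Σ_{j∈N_k} (ρ_k/2)(x_{kj} − z_j)²`,
where `z̃` is the (zero-padded) linearization point. -/
noncomputable def ProxADMM.u {K : ℕ} (P : ProxADMM K) (k : Fin K) (xx : Fin K → ℝ)
    (zt : EuclideanSpace ℝ (Fin K)) (zz : Fin K → ℝ) (yy : Fin K → ℝ) : ℝ :=
  P.g k zt + ⟪gradient (P.g k) zt, restr (P.Nb k) xx - zt⟫
    + ∑ j ∈ P.Nb k, (yy j * (xx j - zz j) + P.ρ k / 2 * (xx j - zz j) ^ 2)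

section Aux

private lemma perj_identity (G Gh a b z ρ y : ℝ) (hy : Gh + y = ρ * (z - a)) :
    G * a - G * b + (y * (a - z) + ρ/2 * (a-z)^2) - (y * (b - z) + ρ/2 * (b-z)^2)
      = (G - Gh) * (a - b) - ρ/2 * (a-b)^2 := by
  linear_combination (a - b) * hy

private lemma inner_restr_sum {K : ℕ} (Nk : Finset (Fin K)) (G : EuclideanSpace ℝ (Fin K))
    (v : Fin K → ℝ) :
    ⟪G, (restr Nk v : EuclideanSpace ℝ (Fin K))⟫ = ∑ j ∈ Nk, G j * v j := by
  rw [PiLp.inner_apply]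
  simp only [RCLike.inner_apply, starRingEnd_apply, star_trivial, restr, PiLp.toLp_apply, ite_mul, zero_mul]
  rw [Finset.sum_ite_mem, Finset.univ_inter]
  exact Finset.sum_congr rfl (fun _ _ => mul_comm _ _)

private lemma eucl_norm_sq {K : ℕ} (v : EuclideanSpace ℝ (Fin K)) :
    ‖v‖ ^ 2 = ∑ i, (v i) ^ 2 := by
  rw [← real_inner_self_eq_norm_sq, PiLp.inner_apply]
  simp only [RCLike.inner_apply, starRingEnd_apply, star_trivial, sq]

private lemma restr_sub_sq {K : ℕ} (Nk : Finset (Fin K)) (v w : Fin K → ℝ) :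
    ‖(restr Nk v : EuclideanSpace ℝ (Fin K)) - restr Nk w‖ ^ 2
      = ∑ j ∈ Nk, (v j - w j) ^ 2 := by
  rw [eucl_norm_sq]
  simp only [PiLp.sub_apply, restr, PiLp.toLp_apply]
  have h : ∀ x : Fin K, ((if x ∈ Nk then v x else 0) - if x ∈ Nk then w x else 0) ^ 2
      = if x ∈ Nk then (v x - w x) ^ 2 else 0 := by
    intro x; by_cases h : x ∈ Nk <;> simp [h]
  rw [Finset.sum_congr rfl (fun x _ => h x), Finset.sum_ite_mem, Finset.univ_inter]

private lemma telescope_z (f : ℕ → ℝ) (t τ m : ℕ) (hm : τ + m = t + 1) :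
    f (t+1) - f τ = ∑ d ∈ Finset.range m, (f (t+1-d) - f (t-d)) := by
  rw [← Finset.sum_range_reflect]
  have h : ∀ i ∈ Finset.range m, (f (t+1-(m-1-i)) - f (t-(m-1-i)))
      = f (τ+(i+1)) - f (τ+i) := by
    intro i hi
    simp only [Finset.mem_range] at hi
    congr 2 <;> omega
  rw [Finset.sum_congr rfl h, Finset.sum_range_sub (fun i => f (τ + i)) m]
  simp only [add_zero]
  rw [hm]

private lemma aux_ineq {K : ℕ} (Nk : Finset (Fin K)) (a b zc yv : Fin K → ℝ)
    (G Gh : EuclideanSpace ℝ (Fin K)) (ρ L D : ℝ) (hL : 0 < L)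
    (key : ∀ j ∈ Nk, Gh j + yv j = ρ * (zc j - a j))
    (hE : ∑ j ∈ Nk, (G j - Gh j) ^ 2 ≤ L ^ 2 * D) :
    (⟪G, (restr Nk a : EuclideanSpace ℝ (Fin K))⟫
       + ∑ j ∈ Nk, (yv j * (a j - zc j) + ρ / 2 * (a j - zc j) ^ 2))
      - (⟪G, (restr Nk b : EuclideanSpace ℝ (Fin K))⟫
       + ∑ j ∈ Nk, (yv j * (b j - zc j) + ρ / 2 * (b j - zc j) ^ 2))
    ≤ L / 2 * D - (ρ - L) / 2 * ∑ j ∈ Nk, (a j - b j) ^ 2 := by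
  have hL' : L ≠ 0 := ne_of_gt hL
  rw [inner_restr_sum, inner_restr_sum]
  have e1 : (∑ j ∈ Nk, G j * a j
        + ∑ j ∈ Nk, (yv j * (a j - zc j) + ρ / 2 * (a j - zc j) ^ 2))
      - (∑ j ∈ Nk, G j * b j
        + ∑ j ∈ Nk, (yv j * (b j - zc j) + ρ / 2 * (b j - zc j) ^ 2))
      = ∑ j ∈ Nk, (G j * a j - G j * b j
          + (yv j * (a j - zc j) + ρ / 2 * (a j - zc j) ^ 2)
          - (yv j * (b j - zc j) + ρ / 2 * (b j - zc j) ^ 2)) := by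
    simp only [Finset.sum_sub_distrib, Finset.sum_add_distrib]
    ring
  rw [e1, Finset.sum_congr rfl
    (fun j hj => perj_identity (G j) (Gh j) (a j) (b j) (zc j) ρ (yv j) (key j hj)),
    Finset.sum_sub_distrib, ← Finset.mul_sum]
  have bnd : ∑ j ∈ Nk, (G j - Gh j) * (a j - b j)
      ≤ (∑ j ∈ Nk, (G j - Gh j) ^ 2) / (2 * L) + L / 2 * ∑ j ∈ Nk, (a j - b j) ^ 2 := by
    rw [Finset.sum_div, Finset.mul_sum, ← Finset.sum_add_distrib]
    apply Finset.sum_le_sum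
    intro j _
    have h0 : 0 ≤ (G j - Gh j - L * (a j - b j)) ^ 2 / (2 * L) := by positivity
    have h1 : (G j - Gh j) * (a j - b j)
        = (G j - Gh j) ^ 2 / (2 * L) + L / 2 * (a j - b j) ^ 2
          - (G j - Gh j - L * (a j - b j)) ^ 2 / (2 * L) := by
      field_simp
      ring
    linarith
  have hEd : (∑ j ∈ Nk, (G j - Gh j) ^ 2) / (2 * L) ≤ L / 2 * D := by
    rw [div_le_iff₀ (by positivity)]
    calc ∑ j ∈ Nk, (G j - Gh j) ^ 2 ≤ L ^ 2 * D := hE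
      _ = L / 2 * D * (2 * L) := by ring
  linarith

end Aux

/-- Exact linearized-subproblem decrease (asynchronous proximal ADMM,
assumptions (A1)-(A3)): since `x_k^{t+1}` exactly minimizes
`u_k(·, z_k^{[t+1]_k}, z_k^{t+1}, y_k^t)`, the decrease of
`u_k(·, z_k^{t+1}, z_k^{t+1}, y_k^t)` from `x_k^t` to `x_k^{t+1}` is as stated. -/
theorem prox_admm_linearized_decrease {K : ℕ} (P : ProxADMM K)
    (α β : Fin K → ℝ)
    (hα : ∀ k, α k = P.ρ k * P.freq k / 2
      - (7 * P.L k / (2 * P.ρ k ^ 2) + 1 / P.ρ k) * ((P.Nb k).card : ℝ) * P.L k ^ 2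
          * ((P.Td k : ℝ) + 1) ^ 2
      - ((P.Nb k).card : ℝ) * P.L k * (P.Td k : ℝ) ^ 2 / 2)
    (hβ : ∀ k, β k = P.ρ k - 7 * P.L k)
    (hA3 : ∀ k, 0 < α k ∧ 0 < β k)
    (t : ℕ) (k : Fin K) :
    P.u k (P.x (t + 1) k) (restr (P.Nb k) (P.z (t + 1))) (P.z (t + 1)) (P.y t k)
      - P.u k (P.x t k) (restr (P.Nb k) (P.z (t + 1))) (P.z (t + 1)) (P.y t k)
    ≤ P.L k * (P.Td k : ℝ) / 2 *
        ∑ d ∈ Finset.range (P.Td k), ∑ j ∈ P.Nb k,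
          ‖P.z (t + 1 - d) j - P.z (t - d) j‖ ^ 2
      - (P.ρ k - P.L k) / 2 * ∑ j ∈ P.Nb k, ‖P.x (t + 1) k j - P.x t k j‖ ^ 2 := by
  classical
  have hLpos := P.L_pos k
  have hρpos := P.ρ_pos k
  set Nk := P.Nb k with hNkdef
  set a : Fin K → ℝ := P.x (t + 1) k with hadef
  set b : Fin K → ℝ := P.x t k with hbdef
  set zc : Fin K → ℝ := P.z (t + 1) with hzcdef
  set zo : Fin K → ℝ := P.z (P.τ t k) with hzodef
  set yv : Fin K → ℝ := P.y t k with hyvdef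
  set G : EuclideanSpace ℝ (Fin K) := gradient (P.g k) (restr Nk zc) with hGdef
  set Gh : EuclideanSpace ℝ (Fin K) := gradient (P.g k) (restr Nk zo) with hGhdef
  set L : ℝ := P.L k with hLdef
  set ρ : ℝ := P.ρ k with hρdef
  set T : ℕ := P.Td k with hTdef
  -- the double sum appearing on the right-hand side
  set D : ℝ := ∑ d ∈ Finset.range T, ∑ j ∈ Nk, (P.z (t + 1 - d) j - P.z (t - d) j) ^ 2
    with hDdef
  -- optimality of the x-update
  have key : ∀ j ∈ Nk, Gh j + yv j = ρ * (zc j - a j) := by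
    intro j hj
    have h := P.x_update t k j hj
    have hρ' : ρ ≠ 0 := ne_of_gt hρpos
    rw [← hadef, ← hzcdef, ← hzodef, ← hyvdef] at h
    have h2 : a j = zc j - (1 / ρ) * (Gh j + yv j) := h
    field_simp at h2
    linarith
  -- gradient error bound
  have hE : ∑ j ∈ Nk, (G j - Gh j) ^ 2 ≤ L ^ 2 * ((T : ℝ) * D) := by
    have h1 : ∑ j ∈ Nk, (G j - Gh j) ^ 2 ≤ ‖G - Gh‖ ^ 2 := by
      rw [eucl_norm_sq]
      simp only [PiLp.sub_apply]
      exact Finset.sum_le_sum_of_subset_of_nonneg (Finset.subset_univ Nk)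
        (fun i _ _ => sq_nonneg _)
    have hlip := P.g_grad_lip k (restr Nk zc) (restr Nk zo)
    have h2 : ‖G - Gh‖ ^ 2 ≤ L ^ 2 * ‖(restr Nk zc : EuclideanSpace ℝ (Fin K)) - restr Nk zo‖ ^ 2 := by
      calc ‖G - Gh‖ ^ 2
          ≤ (L * ‖(restr Nk zc : EuclideanSpace ℝ (Fin K)) - restr Nk zo‖) ^ 2 :=
            pow_le_pow_left₀ (norm_nonneg _) hlip 2
        _ = L ^ 2 * ‖(restr Nk zc : EuclideanSpace ℝ (Fin K)) - restr Nk zo‖ ^ 2 := by ring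
    have h3 : ‖(restr Nk zc : EuclideanSpace ℝ (Fin K)) - restr Nk zo‖ ^ 2
        = ∑ j ∈ Nk, (zc j - zo j) ^ 2 := restr_sub_sq Nk zc zo
    -- per-coordinate telescoping bound
    have h4 : ∀ j ∈ Nk, (zc j - zo j) ^ 2
        ≤ (T : ℝ) * ∑ d ∈ Finset.range T, (P.z (t + 1 - d) j - P.z (t - d) j) ^ 2 := by
      intro j _
      have hτle := P.τ_le t k
      have hτge := P.τ_ge t k
      set m : ℕ := t + 1 - P.τ t k with hmdef
      have hm : P.τ t k + m = t + 1 := by omega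
      have hmT : m ≤ T := by omega
      have htel : zc j - zo j
          = ∑ d ∈ Finset.range m, (P.z (t + 1 - d) j - P.z (t - d) j) :=
        telescope_z (fun s => P.z s j) t (P.τ t k) m hm
      calc (zc j - zo j) ^ 2
          = (∑ d ∈ Finset.range m, (P.z (t + 1 - d) j - P.z (t - d) j)) ^ 2 := by rw [htel]
        _ ≤ ((Finset.range m).card : ℝ)
              * ∑ d ∈ Finset.range m, (P.z (t + 1 - d) j - P.z (t - d) j) ^ 2 :=
            sq_sum_le_card_mul_sum_sq
        _ ≤ (T : ℝ) * ∑ d ∈ Finset.range T, (P.z (t + 1 - d) j - P.z (t - d) j) ^ 2 := by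
            rw [Finset.card_range]
            apply mul_le_mul (by exact_mod_cast hmT)
              (Finset.sum_le_sum_of_subset_of_nonneg
                (Finset.range_subset_range.2 hmT) (fun i _ _ => sq_nonneg _))
              (Finset.sum_nonneg (fun i _ => sq_nonneg _)) (Nat.cast_nonneg T)
    have h5 : ∑ j ∈ Nk, (zc j - zo j) ^ 2 ≤ (T : ℝ) * D := by
      calc ∑ j ∈ Nk, (zc j - zo j) ^ 2
          ≤ ∑ j ∈ Nk, (T : ℝ) * ∑ d ∈ Finset.range T, (P.z (t + 1 - d) j - P.z (t - d) j) ^ 2 :=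
            Finset.sum_le_sum h4
        _ = (T : ℝ) * ∑ j ∈ Nk, ∑ d ∈ Finset.range T, (P.z (t + 1 - d) j - P.z (t - d) j) ^ 2 := by
            rw [Finset.mul_sum]
        _ = (T : ℝ) * D := by rw [hDdef, Finset.sum_comm]
    calc ∑ j ∈ Nk, (G j - Gh j) ^ 2 ≤ ‖G - Gh‖ ^ 2 := h1
      _ ≤ L ^ 2 * ‖(restr Nk zc : EuclideanSpace ℝ (Fin K)) - restr Nk zo‖ ^ 2 := h2
      _ = L ^ 2 * ∑ j ∈ Nk, (zc j - zo j) ^ 2 := by rw [h3]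
      _ ≤ L ^ 2 * ((T : ℝ) * D) := by
          apply mul_le_mul_of_nonneg_left h5 (sq_nonneg L)
  have main := aux_ineq Nk a b zc yv G Gh ρ L ((T : ℝ) * D) hLpos key hE
  -- rewrite the goal
  have hu : P.u k a (restr Nk zc) zc yv - P.u k b (restr Nk zc) zc yv
      = (⟪G, (restr Nk a : EuclideanSpace ℝ (Fin K))⟫
          + ∑ j ∈ Nk, (yv j * (a j - zc j) + ρ / 2 * (a j - zc j) ^ 2))
        - (⟪G, (restr Nk b : EuclideanSpace ℝ (Fin K))⟫
          + ∑ j ∈ Nk, (yv j * (b j - zc j) + ρ / 2 * (b j - zc j) ^ 2)) := by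
    simp only [ProxADMM.u, ← hNkdef, ← hGdef, ← hρdef]
    rw [inner_sub_right, inner_sub_right]
    ring
  simp only [Real.norm_eq_abs, sq_abs]
  rw [hu]
  calc (⟪G, (restr Nk a : EuclideanSpace ℝ (Fin K))⟫
          + ∑ j ∈ Nk, (yv j * (a j - zc j) + ρ / 2 * (a j - zc j) ^ 2))
        - (⟪G, (restr Nk b : EuclideanSpace ℝ (Fin K))⟫
          + ∑ j ∈ Nk, (yv j * (b j - zc j) + ρ / 2 * (b j - zc j) ^ 2))
      ≤ L / 2 * ((T : ℝ) * D) - (ρ - L) / 2 * ∑ j ∈ Nk, (a j - b j) ^ 2 := main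
    _ = L * (T : ℝ) / 2 * D - (ρ - L) / 2 * ∑ j ∈ Nk, (a j - b j) ^ 2 := by ring
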